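/- For |q| < 1, the double sum ∑_{n₁,n₂≥0} q^{n₁+n₂+n₁n₂} / ((q;q)_{n₁} (q;q)_{n₂}) equals 1/((1-q)·(q;q)_∞). -/

import Mathlib

/-- The finite q-Pochhammer symbol `(q;q)_n = ∏_{i=1}^n (1 - q^i)`. -/
noncomputable def qPoch (q : ℂ) (n : ℕ) : ℂ := ∏ i ∈ Finset.range n, (1 - q ^ (i + 1))

/-- The infinite q-Pochhammer symbol `(q;q)_∞ = ∏_{i≥1} (1 - q^i)`. -/
noncomputable def qPochInf (q : ℂ) : ℂ := ∏' i : ℕ, (1 - q ^ (i + 1))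

namespace QAux

open Filter Finset

/-- The Euler q-exponential series. -/
noncomputable def Eu (q z : ℂ) : ℂ := ∑' n : ℕ, z ^ n / qPoch q n

variable {q : ℂ}

lemma norm_mul_pow_lt {z : ℂ} (hq : ‖q‖ < 1) (hz : ‖z‖ < 1) (k : ℕ) :
    ‖q ^ k * z‖ < 1 := by
  rw [norm_mul, norm_pow]
  calc ‖q‖ ^ k * ‖z‖ ≤ 1 * ‖z‖ := by
        gcongr
        exact pow_le_one₀ (norm_nonneg q) hq.le
    _ = ‖z‖ := one_mul _
    _ < 1 := hz

lemma factor_ne_zero {z : ℂ} (hq : ‖q‖ < 1) (hz : ‖z‖ < 1) (k : ℕ) :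
    (1 : ℂ) - q ^ k * z ≠ 0 := by
  intro h
  have h1 : q ^ k * z = 1 := by linear_combination -h
  have := norm_mul_pow_lt hq hz k
  rw [h1] at this
  simp at this

lemma summable_log {z : ℂ} (hq : ‖q‖ < 1) (hz : ‖z‖ < 1) :
    Summable fun k : ℕ => Complex.log (1 - q ^ k * z) := by
  apply Summable.of_norm_bounded_eventually (g := fun k => 3 / 2 * (‖q‖ ^ k * ‖z‖))
  · apply Summable.mul_left
    exact (summable_geometric_of_lt_one (norm_nonneg q) hq).mul_right _
  · rw [Nat.cofinite_eq_atTop]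
    have h0 : Filter.Tendsto (fun k : ℕ => ‖q‖ ^ k * ‖z‖) atTop (nhds 0) := by
      simpa using (tendsto_pow_atTop_nhds_zero_of_lt_one (norm_nonneg q) hq).mul_const ‖z‖
    filter_upwards [h0.eventually (eventually_le_nhds (by norm_num : (0:ℝ) < 1/2))] with k hk
    have hk' : ‖-(q ^ k * z)‖ ≤ 1 / 2 := by simpa [norm_mul] using hk
    have := Complex.norm_log_one_add_half_le_self hk'
    simp only [norm_neg, norm_mul, norm_pow] at this
    calc ‖Complex.log (1 - q ^ k * z)‖
        = ‖Complex.log (1 + -(q ^ k * z))‖ := by ring_nf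
      _ ≤ 3 / 2 * (‖q‖ ^ k * ‖z‖) := this

lemma hasProd_P {z : ℂ} (hq : ‖q‖ < 1) (hz : ‖z‖ < 1) :
    HasProd (fun k : ℕ => 1 - q ^ k * z) (∏' k : ℕ, (1 - q ^ k * z)) := by
  exact (Complex.multipliable_of_summable_log (summable_log hq hz)).hasProd

/-! ### Lower bound for the finite q-Pochhammer symbols -/

/-- Real partial products. -/
noncomputable def rp (q : ℂ) (n : ℕ) : ℝ := ∏ i ∈ Finset.range n, (1 - ‖q‖ ^ (i + 1))

noncomputable def cq (q : ℂ) : ℝ := ∏' i : ℕ, (1 - ‖q‖ ^ (i + 1))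

lemma rfactor_pos (hq : ‖q‖ < 1) (i : ℕ) : 0 < 1 - ‖q‖ ^ (i + 1) := by
  have : ‖q‖ ^ (i + 1) ≤ ‖q‖ := pow_le_of_le_one (norm_nonneg q) hq.le (Nat.succ_ne_zero i)
  linarith

lemma rfactor_le_one (i : ℕ) : 1 - ‖q‖ ^ (i + 1) ≤ 1 := by
  have : (0:ℝ) ≤ ‖q‖ ^ (i + 1) := pow_nonneg (norm_nonneg q) _
  linarith

lemma summable_rlog (hq : ‖q‖ < 1) :
    Summable fun i : ℕ => Real.log (1 - ‖q‖ ^ (i + 1)) := by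
  apply Summable.of_norm_bounded (g := fun i => (‖q‖ * ‖q‖ ^ i) / (1 - ‖q‖))
  · exact ((summable_geometric_of_lt_one (norm_nonneg q) hq).mul_left _).div_const _
  · intro i
    set x := ‖q‖ ^ (i + 1) with hx
    have hx0 : 0 ≤ x := pow_nonneg (norm_nonneg q) _
    have hxq : x ≤ ‖q‖ := pow_le_of_le_one (norm_nonneg q) hq.le (Nat.succ_ne_zero i)
    have h1x : 0 < 1 - x := rfactor_pos hq i
    have hlogle : Real.log (1 - x) ≤ 0 := Real.log_nonpos (by linarith) (by linarith)
    have hkey : -Real.log (1 - x) ≤ x / (1 - x) := by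
      have := Real.log_le_sub_one_of_pos (inv_pos.mpr h1x)
      rw [Real.log_inv] at this
      have hrw : (1 - x)⁻¹ - 1 = x / (1 - x) := by field_simp; ring
      linarith [hrw ▸ this]
    have hnum : x = ‖q‖ * ‖q‖ ^ i := by rw [hx, pow_succ]; ring
    have hfin : x / (1 - x) ≤ (‖q‖ * ‖q‖ ^ i) / (1 - ‖q‖) := by
      rw [hnum]
      gcongr <;> linarith
    have : ‖Real.log (1 - x)‖ = -Real.log (1 - x) := by
      rw [Real.norm_eq_abs, abs_of_nonpos hlogle]
    linarith
  
lemma hasProd_rp (hq : ‖q‖ < 1) :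
    HasProd (fun i : ℕ => 1 - ‖q‖ ^ (i + 1)) (cq q) :=
  (Real.multipliable_of_summable_log (fun i => rfactor_pos hq i) (summable_rlog hq)).hasProd

lemma cq_pos (hq : ‖q‖ < 1) : 0 < cq q := by
  have := Real.rexp_tsum_eq_tprod (f := fun i => 1 - ‖q‖ ^ (i + 1))
    (fun i => rfactor_pos hq i) (summable_rlog hq)
  rw [cq, ← this]
  exact Real.exp_pos _

lemma rp_nonneg (hq : ‖q‖ < 1) (n : ℕ) : 0 ≤ rp q n :=
  Finset.prod_nonneg fun i _ => (rfactor_pos hq i).le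

lemma cq_le_rp (hq : ‖q‖ < 1) (n : ℕ) : cq q ≤ rp q n := by
  have htend : Filter.Tendsto (fun m => rp q m) atTop (nhds (cq q)) :=
    (hasProd_rp hq).tendsto_prod_nat
  have hanti : Antitone (rp q) := by
    apply antitone_nat_of_succ_le
    intro m
    rw [rp, Finset.prod_range_succ]
    exact mul_le_of_le_one_right (rp_nonneg hq m) (rfactor_le_one m)
  exact le_of_tendsto htend (Filter.eventually_atTop.2 ⟨n, fun m hm => hanti hm⟩)

lemma cq_le_norm_qPoch (hq : ‖q‖ < 1) (n : ℕ) : cq q ≤ ‖qPoch q n‖ := by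
  refine (cq_le_rp hq n).trans ?_
  rw [qPoch, rp]
  rw [show ‖∏ i ∈ Finset.range n, (1 - q ^ (i + 1))‖
      = ∏ i ∈ Finset.range n, ‖(1 - q ^ (i + 1))‖ from norm_prod _ _]
  apply Finset.prod_le_prod
  · intro i _; exact (rfactor_pos hq i).le
  · intro i _
    calc 1 - ‖q‖ ^ (i + 1) = ‖(1:ℂ)‖ - ‖q ^ (i + 1)‖ := by simp [norm_pow]
      _ ≤ ‖1 - q ^ (i + 1)‖ := norm_sub_norm_le _ _

lemma qPoch_ne_zero (hq : ‖q‖ < 1) (n : ℕ) : qPoch q n ≠ 0 := by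
  intro h
  have := cq_le_norm_qPoch hq n
  rw [h, norm_zero] at this
  exact absurd this (not_le.mpr (cq_pos hq))

lemma qPoch_succ (n : ℕ) : qPoch q (n + 1) = qPoch q n * (1 - q ^ (n + 1)) := by
  rw [qPoch, qPoch, Finset.prod_range_succ]

lemma one_sub_pow_ne_zero (hq : ‖q‖ < 1) (n : ℕ) : (1 : ℂ) - q ^ (n + 1) ≠ 0 := by
  intro h
  have h2 : qPoch q (n + 1) = 0 := by rw [qPoch_succ, h, mul_zero]
  exact qPoch_ne_zero hq (n + 1) h2

/-! ### The Euler function -/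

lemma summable_Eu {z : ℂ} (hq : ‖q‖ < 1) (hz : ‖z‖ < 1) :
    Summable fun n : ℕ => z ^ n / qPoch q n := by
  apply Summable.of_norm_bounded (g := fun n => ‖z‖ ^ n / cq q)
  · exact (summable_geometric_of_lt_one (norm_nonneg z) hz).div_const _
  · intro n
    rw [norm_div, norm_pow]
    gcongr
    · exact cq_pos hq
    · exact cq_le_norm_qPoch hq n

lemma funEq {z : ℂ} (hq : ‖q‖ < 1) (hz : ‖z‖ < 1) :
    Eu q (q * z) = (1 - z) * Eu q z := by
  have hqz : ‖q * z‖ < 1 := by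
    rw [norm_mul]
    calc ‖q‖ * ‖z‖ ≤ 1 * ‖z‖ := mul_le_mul_of_nonneg_right hq.le (norm_nonneg z)
      _ = ‖z‖ := one_mul _
      _ < 1 := hz
  have hE : Summable fun n : ℕ => z ^ n / qPoch q n := summable_Eu hq hz
  have hEq : Summable fun n : ℕ => (q * z) ^ n / qPoch q n := summable_Eu hq hqz
  have key : Eu q z - Eu q (q * z) = z * Eu q z := by
    rw [Eu, Eu, ← Summable.tsum_sub hE hEq]
    rw [Summable.tsum_eq_zero_add (hE.sub hEq)]
    have h0 : qPoch q 0 = 1 := by simp [qPoch]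
    simp only [pow_zero, h0, div_one, sub_self, zero_add]
    rw [← tsum_mul_left]
    apply tsum_congr
    intro n
    have hP : qPoch q n ≠ 0 := qPoch_ne_zero hq n
    have hfac : (1 : ℂ) - q ^ (n + 1) ≠ 0 := one_sub_pow_ne_zero hq n
    rw [qPoch_succ]
    rw [mul_pow]
    field_simp
    ring
  linear_combination -key

lemma iterEq (hq : ‖q‖ < 1) {z : ℂ} (hz : ‖z‖ < 1) (N : ℕ) :
    Eu q (q ^ N * z) = (∏ k ∈ Finset.range N, (1 - q ^ k * z)) * Eu q z := by
  induction N with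
  | zero => simp
  | succ N ih =>
    have hzN : ‖q ^ N * z‖ < 1 := norm_mul_pow_lt hq hz N
    have h1 : q ^ (N + 1) * z = q * (q ^ N * z) := by ring
    rw [h1, funEq hq hzN, ih, Finset.prod_range_succ]
    ring

lemma Eu_sub_one_bound {z : ℂ} (hq : ‖q‖ < 1) (hz : ‖z‖ < 1) (N : ℕ) :
    ‖Eu q (q ^ N * z) - 1‖ ≤ ‖q‖ ^ N * (‖z‖ / cq q * (1 - ‖z‖)⁻¹) := by
  set w : ℂ := q ^ N * z with hw
  have hwlt : ‖w‖ < 1 := norm_mul_pow_lt hq hz N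
  have hwz : ‖w‖ ≤ ‖z‖ := by
    rw [hw, norm_mul, norm_pow]
    calc ‖q‖ ^ N * ‖z‖ ≤ 1 * ‖z‖ := by
          exact mul_le_mul_of_nonneg_right (pow_le_one₀ (norm_nonneg q) hq.le) (norm_nonneg z)
      _ = ‖z‖ := one_mul _
  have h0 : qPoch q 0 = 1 := by simp [qPoch]
  have htail : Eu q w - 1 = ∑' n : ℕ, w ^ (n + 1) / qPoch q (n + 1) := by
    rw [Eu, Summable.tsum_eq_zero_add (summable_Eu hq hwlt)]
    simp [h0]
  have hgs : Summable fun n : ℕ => ‖w‖ / cq q * ‖z‖ ^ n :=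
    (summable_geometric_of_lt_one (norm_nonneg z) hz).mul_left _
  have hbnd : ∀ n : ℕ, ‖w ^ (n + 1) / qPoch q (n + 1)‖ ≤ ‖w‖ / cq q * ‖z‖ ^ n := by
    intro n
    rw [norm_div, norm_pow]
    have h1 : ‖w‖ ^ (n + 1) ≤ ‖w‖ * ‖z‖ ^ n := by
      rw [pow_succ']
      exact mul_le_mul_of_nonneg_left (pow_le_pow_left₀ (norm_nonneg w) hwz n) (norm_nonneg w)
    calc ‖w‖ ^ (n + 1) / ‖qPoch q (n + 1)‖ ≤ (‖w‖ * ‖z‖ ^ n) / cq q :=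
          div_le_div₀ (by positivity) h1 (cq_pos hq) (cq_le_norm_qPoch hq (n + 1))
      _ = ‖w‖ / cq q * ‖z‖ ^ n := by ring
  have hsum : Summable fun n : ℕ => ‖w ^ (n + 1) / qPoch q (n + 1)‖ :=
    Summable.of_nonneg_of_le (fun n => norm_nonneg _) hbnd hgs
  calc ‖Eu q w - 1‖ = ‖∑' n : ℕ, w ^ (n + 1) / qPoch q (n + 1)‖ := by rw [htail]
    _ ≤ ∑' n : ℕ, ‖w ^ (n + 1) / qPoch q (n + 1)‖ := norm_tsum_le_tsum_norm hsum
    _ ≤ ∑' n : ℕ, ‖w‖ / cq q * ‖z‖ ^ n := Summable.tsum_le_tsum hbnd hsum hgs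
    _ = ‖w‖ / cq q * (1 - ‖z‖)⁻¹ := by
        rw [tsum_mul_left, tsum_geometric_of_lt_one (norm_nonneg z) hz]
    _ ≤ ‖q‖ ^ N * (‖z‖ / cq q * (1 - ‖z‖)⁻¹) := by
        have hwn : ‖w‖ = ‖q‖ ^ N * ‖z‖ := by rw [hw, norm_mul, norm_pow]
        rw [hwn]
        ring_nf
        exact le_refl _

lemma tendsto_Eu {z : ℂ} (hq : ‖q‖ < 1) (hz : ‖z‖ < 1) :
    Filter.Tendsto (fun N : ℕ => Eu q (q ^ N * z)) atTop (nhds 1) := by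
  rw [tendsto_iff_norm_sub_tendsto_zero]
  apply squeeze_zero (fun N => norm_nonneg _) (fun N => Eu_sub_one_bound hq hz N)
  simpa using (tendsto_pow_atTop_nhds_zero_of_lt_one (norm_nonneg q) hq).mul_const
    (‖z‖ / cq q * (1 - ‖z‖)⁻¹)

lemma euler {z : ℂ} (hq : ‖q‖ < 1) (hz : ‖z‖ < 1) :
    (∏' k : ℕ, (1 - q ^ k * z)) * Eu q z = 1 := by
  have h1 : Filter.Tendsto (fun N : ℕ => (∏ k ∈ Finset.range N, (1 - q ^ k * z)) * Eu q z)
      atTop (nhds ((∏' k : ℕ, (1 - q ^ k * z)) * Eu q z)) :=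
    ((hasProd_P hq hz).tendsto_prod_nat).mul_const _
  have h2 : Filter.Tendsto (fun N : ℕ => (∏ k ∈ Finset.range N, (1 - q ^ k * z)) * Eu q z)
      atTop (nhds 1) := by
    have : (fun N : ℕ => (∏ k ∈ Finset.range N, (1 - q ^ k * z)) * Eu q z)
        = fun N : ℕ => Eu q (q ^ N * z) := funext fun N => (iterEq hq hz N).symm
    rw [this]
    exact tendsto_Eu hq hz
  exact tendsto_nhds_unique h1 h2

end QAux

theorem stmt0 (q : ℂ) (hq : ‖q‖ < 1) :
    ∑' n : ℕ × ℕ, q ^ (n.1 + n.2 + n.1 * n.2) / (qPoch q n.1 * qPoch q n.2)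
      = 1 / ((1 - q) * qPochInf q) := by
  classical
  open QAux Finset in
  -- Euler identity at z = q, rewritten in terms of `qPochInf`
  have hshift : (fun k : ℕ => 1 - q ^ k * q) = fun k : ℕ => 1 - q ^ (k + 1) :=
    funext fun k => by rw [pow_succ]
  have heuler : qPochInf q * Eu q q = 1 := by
    have := euler (q := q) (z := q) hq hq
    rwa [hshift, ← qPochInf] at this
  have hInf_ne : qPochInf q ≠ 0 := left_ne_zero_of_mul_eq_one heuler
  have hEuq : Eu q q = (qPochInf q)⁻¹ := by
    field_simp
    linear_combination heuler
  -- the key consequence of the functional equation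
  have hEuPow : ∀ n : ℕ, Eu q (q ^ (n + 1)) = qPoch q n * Eu q q := by
    intro n
    have := iterEq (q := q) (z := q) hq hq n
    rw [← pow_succ] at this
    rw [this]
    have hprod : (∏ k ∈ Finset.range n, (1 - q ^ k * q)) = qPoch q n :=
      Finset.prod_congr rfl fun k _ => by rw [pow_succ]
    rw [hprod]
  -- termwise factorization
  have hterm : ∀ n1 n2 : ℕ, q ^ (n1 + n2 + n1 * n2) / (qPoch q n1 * qPoch q n2)
      = q ^ n1 / qPoch q n1 * ((q ^ (n1 + 1)) ^ n2 / qPoch q n2) := by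
    intro n1 n2
    rw [← pow_mul, div_mul_div_comm, ← pow_add]
    congr 2
    ring
  -- summability
  have hpow1 : ∀ n1 : ℕ, ‖q ^ (n1 + 1)‖ < 1 := fun n1 => by
    rw [norm_pow]
    exact pow_lt_one₀ (norm_nonneg q) hq (Nat.succ_ne_zero n1)
  have hinner : ∀ n1 : ℕ,
      Summable fun n2 : ℕ => q ^ (n1 + n2 + n1 * n2) / (qPoch q n1 * qPoch q n2) := by
    intro n1
    have : Summable fun n2 : ℕ => q ^ n1 / qPoch q n1 * ((q ^ (n1 + 1)) ^ n2 / qPoch q n2) :=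
      (summable_Eu hq (hpow1 n1)).mul_left _
    exact this.congr fun n2 => (hterm n1 n2).symm
  have hFs : Summable fun p : ℕ × ℕ => q ^ (p.1 + p.2 + p.1 * p.2) / (qPoch q p.1 * qPoch q p.2) := by
    apply Summable.of_norm_bounded (g := fun p : ℕ × ℕ => ‖q‖ ^ p.1 * ‖q‖ ^ p.2 / (cq q * cq q))
    · apply Summable.div_const
      exact Summable.mul_of_nonneg (summable_geometric_of_lt_one (norm_nonneg q) hq)
        (summable_geometric_of_lt_one (norm_nonneg q) hq)
        (fun n => pow_nonneg (norm_nonneg q) n) (fun n => pow_nonneg (norm_nonneg q) n)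
    · rintro ⟨n1, n2⟩
      rw [norm_div, norm_mul, norm_pow]
      have hnum : ‖q‖ ^ (n1 + n2 + n1 * n2) ≤ ‖q‖ ^ n1 * ‖q‖ ^ n2 := by
        rw [← pow_add]
        exact pow_le_pow_of_le_one (norm_nonneg q) hq.le (by omega)
      have hden : cq q * cq q ≤ ‖qPoch q n1‖ * ‖qPoch q n2‖ :=
        mul_le_mul (cq_le_norm_qPoch hq n1) (cq_le_norm_qPoch hq n2) (cq_pos hq).le
          (norm_nonneg _)
      exact div_le_div₀ (by positivity) hnum (mul_pos (cq_pos hq) (cq_pos hq)) hden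
  -- put everything together
  rw [Summable.tsum_prod' hFs hinner]
  have hrow : ∀ n1 : ℕ,
      ∑' n2 : ℕ, q ^ (n1 + n2 + n1 * n2) / (qPoch q n1 * qPoch q n2)
        = q ^ n1 * (qPochInf q)⁻¹ := by
    intro n1
    calc ∑' n2 : ℕ, q ^ (n1 + n2 + n1 * n2) / (qPoch q n1 * qPoch q n2)
        = ∑' n2 : ℕ, q ^ n1 / qPoch q n1 * ((q ^ (n1 + 1)) ^ n2 / qPoch q n2) :=
          tsum_congr fun n2 => hterm n1 n2
      _ = q ^ n1 / qPoch q n1 * Eu q (q ^ (n1 + 1)) := by rw [tsum_mul_left]; rfl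
      _ = q ^ n1 / qPoch q n1 * (qPoch q n1 * Eu q q) := by rw [hEuPow n1]
      _ = q ^ n1 * Eu q q := by
          field_simp [qPoch_ne_zero hq n1]
      _ = q ^ n1 * (qPochInf q)⁻¹ := by rw [hEuq]
  rw [tsum_congr hrow, tsum_mul_right, tsum_geometric_of_norm_lt_one hq, one_div, mul_inv]
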